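/- Let p be a cubic polynomial in n variables with Hessian ∇²p(x) = A_0 + x_1·A_1 + ... + x_n·A_n for symmetric matrices A_i. Then p is convex on the nonnegative orthant if and only if p is cop-SOS convex, i.e., there exist matrices P_0, ..., P_n with ∇²p(x) = P_0P_0ᵀ + x_1·P_1P_1ᵀ + ... + x_n·P_nP_nᵀ. -/

import Mathlib

open MvPolynomial Matrix

private lemma auxL1 {n : ℕ} (p : MvPolynomial (Fin n) ℝ) (s : Fin n → Polynomial ℝ) (t : ℝ) :
    Polynomial.eval t (MvPolynomial.aeval s p)
      = MvPolynomial.eval (fun i => Polynomial.eval t (s i)) p := by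
  rw [MvPolynomial.aeval_def]
  rw [show Polynomial.eval t (MvPolynomial.eval₂ (algebraMap ℝ (Polynomial ℝ)) s p)
      = (Polynomial.evalRingHom t) (MvPolynomial.eval₂ (algebraMap ℝ (Polynomial ℝ)) s p) from rfl]
  rw [MvPolynomial.eval₂_comp_left (Polynomial.evalRingHom t)]
  rw [MvPolynomial.eval]
  congr 1
  · ext r; simp

private lemma auxChain {n : ℕ} (p : MvPolynomial (Fin n) ℝ) (s : Fin n → Polynomial ℝ) :
    Polynomial.derivative (MvPolynomial.aeval s p)
      = ∑ i, Polynomial.derivative (s i) * MvPolynomial.aeval s (pderiv i p) := by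
  induction p using MvPolynomial.induction_on with
  | C a => simp
  | add p q hp hq => simp [hp, hq, Finset.sum_add_distrib, mul_add]
  | mul_X p i hp =>
      simp only [_root_.map_mul, MvPolynomial.aeval_X, Polynomial.derivative_mul, hp,
        MvPolynomial.pderiv_mul, MvPolynomial.pderiv_X, map_add, Pi.single_apply,
        apply_ite (MvPolynomial.aeval s), _root_.map_one, _root_.map_zero, mul_ite, mul_one, mul_zero,
        mul_add, Finset.sum_add_distrib, Finset.sum_ite_eq, Finset.mem_univ, if_true]
      rw [Finset.sum_mul]
      congr 1
      · exact Finset.sum_congr rfl fun j _ => by ring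
      · ring

private lemma cubicEval (Q : Polynomial ℝ) (c d : ℝ)
    (hQ : Polynomial.derivative (Polynomial.derivative Q)
      = Polynomial.C c + Polynomial.C d * Polynomial.X) (t : ℝ) :
    Polynomial.eval t Q = Polynomial.eval 0 Q + Polynomial.eval 0 (Polynomial.derivative Q) * t
      + c/2 * t^2 + d/6 * t^3 := by
  set b := Polynomial.eval 0 (Polynomial.derivative Q) with hb
  set G : Polynomial ℝ := Polynomial.C (Polynomial.eval 0 Q) + Polynomial.C b * Polynomial.X
      + Polynomial.C (c/2) * Polynomial.X^2 + Polynomial.C (d/6) * Polynomial.X^3 with hG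
  have dG : Polynomial.derivative G = Polynomial.C b + Polynomial.C c * Polynomial.X
      + Polynomial.C (d/2) * Polynomial.X^2 := by
    rw [hG]
    simp only [Polynomial.derivative_add, Polynomial.derivative_C, Polynomial.derivative_C_mul,
      Polynomial.derivative_X, Polynomial.derivative_X_pow, zero_add, mul_one]
    rw [← mul_assoc, ← mul_assoc, ← Polynomial.C_mul, ← Polynomial.C_mul]
    norm_num
    rw [← Polynomial.C_mul]
    congr 1
    ring
  have ddG : Polynomial.derivative (Polynomial.derivative G)
      = Polynomial.C c + Polynomial.C d * Polynomial.X := by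
    rw [dG]
    simp only [Polynomial.derivative_add, Polynomial.derivative_C, Polynomial.derivative_C_mul,
      Polynomial.derivative_X, Polynomial.derivative_X_pow, zero_add, mul_one]
    rw [← mul_assoc, ← Polynomial.C_mul]
    norm_num
  have h2 : Polynomial.derivative (Polynomial.derivative (Q - G)) = 0 := by
    rw [Polynomial.derivative_sub, Polynomial.derivative_sub, hQ, ddG, sub_self]
  have h1 : Polynomial.derivative (Q - G)
      = Polynomial.C ((Polynomial.derivative (Q - G)).coeff 0) :=
    Polynomial.eq_C_of_derivative_eq_zero h2
  have e1 : (Polynomial.derivative (Q - G)).coeff 0 = 0 := by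
    have h := congrArg (Polynomial.eval 0) h1
    rw [Polynomial.eval_C] at h
    rw [← h, Polynomial.derivative_sub, dG]
    simp [← hb]
  have h3 : Polynomial.derivative (Q - G) = 0 := by rw [h1, e1, map_zero]
  have h0 : Q - G = Polynomial.C ((Q - G).coeff 0) :=
    Polynomial.eq_C_of_derivative_eq_zero h3
  have e0 : (Q - G).coeff 0 = 0 := by
    have h := congrArg (Polynomial.eval 0) h0
    rw [Polynomial.eval_C] at h
    rw [← h]
    simp [hG]
  have hQG : Q = G := sub_eq_zero.mp (by rw [h0, e0, map_zero])
  rw [hQG]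
  simp [hG]

private lemma aux_eps {a b : ℝ} (h : ∀ ε : ℝ, 0 < ε → ε ≤ 1 → 0 ≤ a + ε * b) : 0 ≤ a := by
  by_contra hn
  push_neg at hn
  rcases le_or_gt b 0 with hb | hb
  · have := h 1 one_pos le_rfl; nlinarith
  · have hd : (0:ℝ) < -a / (2*b) := div_pos (by linarith) (by linarith)
    have hε : 0 < min 1 (-a/(2*b)) := lt_min one_pos hd
    have h1 := h _ hε (min_le_left _ _)
    have h2 : min 1 (-a/(2*b)) ≤ -a/(2*b) := min_le_right _ _
    have h3 : min 1 (-a/(2*b)) * b ≤ (-a/(2*b)) * b :=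
      mul_le_mul_of_nonneg_right h2 hb.le
    have h4 : (-a/(2*b)) * b = -a/2 := by field_simp
    nlinarith

private lemma aux_lin {a b : ℝ} (h : ∀ t : ℝ, 0 ≤ t → 0 ≤ a + t * b) : 0 ≤ b := by
  by_contra hn
  push_neg at hn
  have hb0 : b ≠ 0 := ne_of_lt hn
  have ht : (0:ℝ) ≤ (|a| + 1) / (-b) := div_nonneg (by positivity) (by linarith)
  have h1 := h _ ht
  have h2 : (|a| + 1) / (-b) * b = -(|a| + 1) := by
    rw [div_mul_eq_mul_div, mul_div_assoc, div_neg, div_self hb0]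
    ring
  nlinarith [le_abs_self a, neg_abs_le a]

private lemma auxSOS {n : ℕ} (M : Matrix (Fin n) (Fin n) ℝ) (v : Fin n → ℝ) :
    0 ≤ ∑ i, ∑ j, v i * v j * (M * Mᵀ) j i := by
  have e : ∑ i, ∑ j, v i * v j * (M * Mᵀ) j i = ∑ k, (∑ i, v i * M i k)^2 := by
    have e1 : ∀ i j : Fin n, v i * v j * (M * Mᵀ) j i
        = ∑ k, (v i * M i k) * (v j * M j k) := by
      intro i j
      rw [Matrix.mul_apply, Finset.mul_sum]
      exact Finset.sum_congr rfl fun k _ => by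
        rw [Matrix.transpose_apply]; ring
    calc ∑ i, ∑ j, v i * v j * (M * Mᵀ) j i
        = ∑ i, ∑ j, ∑ k, (v i * M i k) * (v j * M j k) :=
          Finset.sum_congr rfl fun i _ => Finset.sum_congr rfl fun j _ => e1 i j
      _ = ∑ i, ∑ k, ∑ j, (v i * M i k) * (v j * M j k) :=
          Finset.sum_congr rfl fun i _ => Finset.sum_comm
      _ = ∑ k, ∑ i, ∑ j, (v i * M i k) * (v j * M j k) := Finset.sum_comm
      _ = ∑ k, (∑ i, v i * M i k) * (∑ j, v j * M j k) :=
          Finset.sum_congr rfl fun k _ => (Finset.sum_mul_sum _ _ _ _).symm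
      _ = ∑ k, (∑ i, v i * M i k)^2 :=
          Finset.sum_congr rfl fun k _ => (sq _).symm
  rw [e]
  exact Finset.sum_nonneg fun k _ => sq_nonneg _

private lemma auxExpand {n : ℕ} (M0 : Matrix (Fin n) (Fin n) ℝ)
    (M : Fin n → Matrix (Fin n) (Fin n) ℝ) (x v : Fin n → ℝ) :
    ∑ i, ∑ j, v i * v j * ((M0 + ∑ l, x l • M l) j i)
      = (∑ i, ∑ j, v i * v j * M0 j i)
        + ∑ l, x l * (∑ i, ∑ j, v i * v j * (M l) j i) := by
  calc ∑ i, ∑ j, v i * v j * ((M0 + ∑ l, x l • M l) j i)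
      = ∑ i, ∑ j, (v i * v j * M0 j i + ∑ l, x l * (v i * v j * (M l) j i)) := by
        refine Finset.sum_congr rfl fun i _ => Finset.sum_congr rfl fun j _ => ?_
        rw [Matrix.add_apply, Matrix.sum_apply, mul_add, Finset.mul_sum]
        congr 1
        exact Finset.sum_congr rfl fun l _ => by
          rw [Matrix.smul_apply, smul_eq_mul]; ring
    _ = (∑ i, ∑ j, v i * v j * M0 j i) + ∑ i, ∑ j, ∑ l, x l * (v i * v j * (M l) j i) := by
        rw [← Finset.sum_add_distrib]
        exact Finset.sum_congr rfl fun i _ => by rw [← Finset.sum_add_distrib]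
    _ = (∑ i, ∑ j, v i * v j * M0 j i) + ∑ l, x l * (∑ i, ∑ j, v i * v j * (M l) j i) := by
        congr 1
        calc ∑ i, ∑ j, ∑ l, x l * (v i * v j * (M l) j i)
            = ∑ i, ∑ l, ∑ j, x l * (v i * v j * (M l) j i) :=
              Finset.sum_congr rfl fun i _ => Finset.sum_comm
          _ = ∑ l, ∑ i, ∑ j, x l * (v i * v j * (M l) j i) := Finset.sum_comm
          _ = ∑ l, x l * (∑ i, ∑ j, v i * v j * (M l) j i) := by
              refine Finset.sum_congr rfl fun l _ => ?_
              rw [Finset.mul_sum]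
              exact Finset.sum_congr rfl fun i _ => by rw [Finset.mul_sum]

/-- For a cubic polynomial `p` whose Hessian is the affine matrix polynomial
`A₀ + x₁A₁ + ⋯ + x_nA_n` with the `Aᵢ` symmetric, `p` is convex on the
nonnegative orthant iff it is cop-SOS convex with constant matrices, i.e.,
`∇²p(x) = P₀P₀ᵀ + ∑ᵢ xᵢ·PᵢPᵢᵀ`. -/
theorem stmt6 (n : ℕ) (p : MvPolynomial (Fin n) ℝ)
    (hdeg : p.totalDegree ≤ 3)
    (A0 : Matrix (Fin n) (Fin n) ℝ) (A : Fin n → Matrix (Fin n) (Fin n) ℝ)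
    (hA0 : A0.IsSymm) (hA : ∀ l, (A l).IsSymm)
    (hHess : ∀ (x : Fin n → ℝ) (i j : Fin n),
      eval x (pderiv i (pderiv j p)) = (A0 + ∑ l, x l • A l) i j) :
    ConvexOn ℝ {x : Fin n → ℝ | ∀ j, 0 ≤ x j} (fun x => eval x p) ↔
      ∃ (P0 : Matrix (Fin n) (Fin n) ℝ) (P : Fin n → Matrix (Fin n) (Fin n) ℝ),
        ∀ (x : Fin n → ℝ) (i j : Fin n),
          eval x (pderiv i (pderiv j p)) =
            (P0 * P0ᵀ + ∑ l, x l • (P l * (P l)ᵀ)) i j := by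
  set qA0 : (Fin n → ℝ) → ℝ := fun v => ∑ i, ∑ j, v i * v j * A0 j i with hqA0
  set qA : Fin n → (Fin n → ℝ) → ℝ := fun l v => ∑ i, ∑ j, v i * v j * (A l) j i with hqA
  set cf : (Fin n → ℝ) → (Fin n → ℝ) → ℝ := fun x v => qA0 v + ∑ l, x l * qA l v with hcf
  set df : (Fin n → ℝ) → ℝ := fun v => ∑ l, v l * qA l v with hdf
  -- Taylor expansion along lines
  have Tc : ∀ x v : Fin n → ℝ, ∃ β : ℝ, ∀ t : ℝ,
      MvPolynomial.eval (fun i => x i + v i * t) p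
        = eval x p + β * t + (cf x v)/2 * t^2 + (df v)/6 * t^3 := by
    intro x v
    set s : Fin n → Polynomial ℝ := fun i => Polynomial.C (x i) + Polynomial.C (v i) * Polynomial.X
      with hs
    set Q := MvPolynomial.aeval s p with hQdef
    have hse : ∀ (t : ℝ) (i : Fin n), Polynomial.eval t (s i) = x i + v i * t := by
      intro t i; simp [hs]
    have hQe : ∀ t, Polynomial.eval t Q = MvPolynomial.eval (fun i => x i + v i * t) p := by
      intro t; rw [hQdef, auxL1,
        show (fun i => Polynomial.eval t (s i)) = (fun i => x i + v i * t) from funext (hse t)]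
    have hs' : ∀ i, Polynomial.derivative (s i) = Polynomial.C (v i) := by
      intro i; simp [hs]
    have hQ1 : Polynomial.derivative Q
        = ∑ i, Polynomial.C (v i) * MvPolynomial.aeval s (pderiv i p) := by
      rw [hQdef, auxChain]
      exact Finset.sum_congr rfl fun i _ => by rw [hs']
    have hQ2 : Polynomial.derivative (Polynomial.derivative Q)
        = ∑ i, ∑ j, Polynomial.C (v i)
            * (Polynomial.C (v j) * MvPolynomial.aeval s (pderiv j (pderiv i p))) := by
      rw [hQ1, map_sum]
      refine Finset.sum_congr rfl fun i _ => ?_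
      rw [Polynomial.derivative_C_mul, auxChain, Finset.mul_sum]
      exact Finset.sum_congr rfl fun j _ => by rw [hs']
    have hQ2e : Polynomial.derivative (Polynomial.derivative Q)
        = Polynomial.C (cf x v) + Polynomial.C (df v) * Polynomial.X := by
      apply Polynomial.funext
      intro t
      rw [hQ2]
      simp only [Polynomial.eval_finset_sum, Polynomial.eval_mul, Polynomial.eval_C,
        Polynomial.eval_add, Polynomial.eval_X]
      have he : ∀ i j : Fin n, Polynomial.eval t (MvPolynomial.aeval s (pderiv j (pderiv i p)))
          = ((A0 + ∑ l, (x l + v l * t) • A l) j i) := by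
        intro i j
        rw [auxL1]
        rw [show (fun i => Polynomial.eval t (s i)) = (fun i => x i + v i * t)
          from funext (hse t)]
        exact hHess _ j i
      simp only [he]
      have e2 : ∑ i, ∑ j, v i * (v j * ((A0 + ∑ l, (x l + v l * t) • A l) j i))
          = ∑ i, ∑ j, v i * v j * (((A0 + ∑ l, (x l + v l * t) • A l)) j i) :=
        Finset.sum_congr rfl fun i _ => Finset.sum_congr rfl fun j _ => by ring
      rw [e2, auxExpand A0 A (fun l => x l + v l * t) v]
      have e3 : ∑ l, (x l + v l * t) * (∑ i, ∑ j, v i * v j * (A l) j i)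
          = (∑ l, x l * qA l v) + (∑ l, v l * qA l v) * t := by
        rw [Finset.sum_mul, ← Finset.sum_add_distrib]
        refine Finset.sum_congr rfl fun l _ => ?_
        simp only [hqA]
        ring
      rw [e3]
      simp only [hcf, hdf, hqA0]
      ring
    have h0 : Polynomial.eval 0 Q = eval x p := by
      rw [hQe 0, show (fun i => x i + v i * 0) = x from funext fun i => by ring]
    refine ⟨Polynomial.eval 0 (Polynomial.derivative Q), fun t => ?_⟩
    rw [← hQe t, cubicEval Q _ _ hQ2e t, h0]
  -- affine property of cf
  have hcd : ∀ (x v : Fin n → ℝ) (s : ℝ),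
      cf (fun i => x i + v i * s) v = cf x v + s * df v := by
    intro x v s
    simp only [hcf, hdf]
    have e1 : ∑ l, (x l + v l * s) * qA l v = ∑ l, (x l * qA l v + s * (v l * qA l v)) :=
      Finset.sum_congr rfl fun l _ => by ring
    rw [e1, Finset.sum_add_distrib, Finset.mul_sum]
    ring
  constructor
  · -- convex ⇒ decomposition
    intro hconv
    have hmid : ∀ (x v : Fin n → ℝ) (h : ℝ), 0 < h →
        (∀ j, 0 ≤ x j + v j * h) → (∀ j, 0 ≤ x j + v j * (-h)) → 0 ≤ cf x v := by
      intro x v h hh hu hw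
      obtain ⟨β, hT⟩ := Tc x v
      have hmem_u : (fun j => x j + v j * h) ∈ {x : Fin n → ℝ | ∀ j, 0 ≤ x j} := hu
      have hmem_w : (fun j => x j + v j * (-h)) ∈ {x : Fin n → ℝ | ∀ j, 0 ≤ x j} := hw
      have hcomb := hconv.2 hmem_u hmem_w (by norm_num : (0:ℝ) ≤ 1/2)
        (by norm_num : (0:ℝ) ≤ 1/2) (by norm_num)
      have hxuw : (1/2 : ℝ) • (fun j => x j + v j * h) + (1/2 : ℝ) • (fun j => x j + v j * (-h))
          = x := by
        funext j
        simp only [Pi.add_apply, Pi.smul_apply, smul_eq_mul]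
        ring
      rw [hxuw] at hcomb
      simp only [smul_eq_mul] at hcomb
      have hsum : (eval fun j => x j + v j * h) p + (eval fun j => x j + v j * (-h)) p
          = 2 * eval x p + cf x v * h^2 := by
        rw [hT h, hT (-h)]; ring
      have key : 0 ≤ cf x v * h^2 := by linarith
      nlinarith [key, mul_pos hh hh]
    have habs : ∀ v : Fin n → ℝ, ∀ j, |v j| ≤ 1 + ∑ m, |v m| := by
      intro v j
      have h1 : |v j| ≤ ∑ m, |v m| :=
        Finset.single_le_sum (fun i _ => abs_nonneg (v i)) (Finset.mem_univ j)
      have h2 : (0:ℝ) ≤ ∑ m, |v m| := Finset.sum_nonneg fun i _ => abs_nonneg (v i)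
      linarith
    have hq0pos : ∀ v : Fin n → ℝ, 0 ≤ qA0 v := by
      intro v
      apply aux_eps (b := ∑ l, qA l v)
      intro ε hε hε1
      have hcfe : cf (fun _ => ε) v = qA0 v + ε * ∑ l, qA l v := by
        simp only [hcf]
        rw [Finset.mul_sum]
      rw [← hcfe]
      set Sv := ∑ m, |v m| with hSv
      have hS : 0 ≤ Sv := Finset.sum_nonneg fun i _ => abs_nonneg (v i)
      have hh : 0 < ε / (1 + Sv) := div_pos hε (by linarith)
      have hbound : ∀ j, ε / (1 + Sv) * |v j| ≤ ε := by
        intro j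
        calc ε / (1 + Sv) * |v j| ≤ ε / (1 + Sv) * (1 + Sv) :=
              mul_le_mul_of_nonneg_left (habs v j) hh.le
          _ = ε := div_mul_cancel₀ _ (by linarith)
      refine hmid _ v (ε / (1 + Sv)) hh (fun j => ?_) (fun j => ?_)
      · nlinarith [hbound j, neg_abs_le (v j), le_abs_self (v j), hh.le, abs_nonneg (v j)]
      · nlinarith [hbound j, neg_abs_le (v j), le_abs_self (v j), hh.le, abs_nonneg (v j)]
    have hqlpos : ∀ (l : Fin n) (v : Fin n → ℝ), 0 ≤ qA l v := by
      intro l v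
      apply aux_lin (a := qA0 v + ∑ m, qA m v)
      intro t htt
      have hcfe : cf (fun i => 1 + t * (if i = l then 1 else 0)) v
          = (qA0 v + ∑ m, qA m v) + t * qA l v := by
        simp only [hcf]
        have e1 : ∑ m, (1 + t * (if m = l then 1 else 0)) * qA m v
            = ∑ m, (qA m v + (if m = l then t * qA m v else 0)) :=
          Finset.sum_congr rfl fun m _ => by by_cases hm : m = l <;> simp [hm] <;> ring
        rw [e1, Finset.sum_add_distrib, Finset.sum_ite_eq' Finset.univ l (fun m => t * qA m v)]
        simp only [Finset.mem_univ, if_true]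
        ring
      rw [← hcfe]
      set Sv := ∑ m, |v m| with hSv
      have hS : 0 ≤ Sv := Finset.sum_nonneg fun i _ => abs_nonneg (v i)
      have hh : 0 < 1 / (1 + Sv) := div_pos one_pos (by linarith)
      have hbound : ∀ j, 1 / (1 + Sv) * |v j| ≤ 1 := by
        intro j
        calc 1 / (1 + Sv) * |v j| ≤ 1 / (1 + Sv) * (1 + Sv) :=
              mul_le_mul_of_nonneg_left (habs v j) hh.le
          _ = 1 := div_mul_cancel₀ _ (by linarith)
      have hx1 : ∀ j, 1 ≤ 1 + t * (if j = l then 1 else 0) := by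
        intro j; by_cases hj : j = l <;> simp [hj] <;> nlinarith
      refine hmid _ v (1 / (1 + Sv)) hh (fun j => ?_) (fun j => ?_)
      · nlinarith [hbound j, neg_abs_le (v j), le_abs_self (v j), hh.le, abs_nonneg (v j), hx1 j]
      · nlinarith [hbound j, neg_abs_le (v j), le_abs_self (v j), hh.le, abs_nonneg (v j), hx1 j]
    -- PSD matrices
    have hform : ∀ (M : Matrix (Fin n) (Fin n) ℝ) (y : Fin n → ℝ),
        star y ⬝ᵥ M *ᵥ y = ∑ i, ∑ j, y i * y j * M j i := by
      intro M y
      rw [show star y = y from funext fun i => by simp]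
      have e0 : y ⬝ᵥ M *ᵥ y = ∑ i, ∑ j, y i * (M i j * y j) := by
        simp [dotProduct, Matrix.mulVec, Finset.mul_sum]
      rw [e0,
        show (∑ i, ∑ j, y i * (M i j * y j)) = ∑ j, ∑ i, y i * (M i j * y j) from
          Finset.sum_comm]
      exact Finset.sum_congr rfl fun j _ => Finset.sum_congr rfl fun i _ => by ring
    have hpsd : ∀ (M : Matrix (Fin n) (Fin n) ℝ), M.IsSymm →
        (∀ y : Fin n → ℝ, 0 ≤ ∑ i, ∑ j, y i * y j * M j i) →
        ∃ B : Matrix (Fin n) (Fin n) ℝ, M = B * Bᵀ := by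
      intro M hsym hq
      have hpsd : M.PosSemidef := by
        refine Matrix.posSemidef_iff_dotProduct_mulVec.mpr ⟨?_, ?_⟩
        · exact Matrix.IsHermitian.ext fun i j => by
            rw [star_trivial]
            exact congrFun (congrFun hsym i) j
        · intro y
          rw [hform M y]
          exact hq y
      obtain ⟨B, hB⟩ := (by
        open scoped MatrixOrder in
        exact ⟨CFC.sqrt M, by
          rw [← Matrix.star_eq_conjTranspose, (IsSelfAdjoint.of_nonneg (CFC.sqrt_nonneg M)).star_eq,
            CFC.sqrt_mul_sqrt_self M (Matrix.nonneg_iff_posSemidef.mpr hpsd)]⟩ :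
        ∃ B : Matrix (Fin n) (Fin n) ℝ, M = Bᴴ * B)
      have hBt : Bᴴ = Bᵀ := by
        ext i j
        simp [Matrix.conjTranspose_apply, Matrix.transpose_apply]
      exact ⟨Bᵀ, by rw [hB, Matrix.transpose_transpose, hBt]⟩
    obtain ⟨P0, hP0⟩ := hpsd A0 hA0 hq0pos
    have hPl : ∀ l, ∃ B : Matrix (Fin n) (Fin n) ℝ, A l = B * Bᵀ :=
      fun l => hpsd (A l) (hA l) (hqlpos l)
    choose P hP using hPl
    refine ⟨P0, P, fun x i j => ?_⟩
    rw [hHess x i j, hP0]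
    have hsum : (∑ l, x l • A l) = ∑ l, x l • (P l * (P l)ᵀ) :=
      Finset.sum_congr rfl fun l _ => by rw [hP l]
    rw [hsum]
  · -- decomposition ⇒ convex
    rintro ⟨P0, P, hP⟩
    have hmatch : ∀ x : Fin n → ℝ,
        (A0 + ∑ l, x l • A l) = (P0 * P0ᵀ + ∑ l, x l • (P l * (P l)ᵀ)) := by
      intro x; ext i j; rw [← hHess x i j, hP x i j]
    have hcpos : ∀ w v : Fin n → ℝ, (∀ j, 0 ≤ w j) → 0 ≤ cf w v := by
      intro w v hw
      have e1 : cf w v = ∑ i, ∑ j, v i * v j * ((A0 + ∑ l, w l • A l) j i) := by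
        simp only [hcf, hqA0, hqA]
        exact (auxExpand A0 A w v).symm
      rw [e1, hmatch w, auxExpand (P0 * P0ᵀ) (fun l => P l * (P l)ᵀ) w v]
      exact add_nonneg (auxSOS P0 v)
        (Finset.sum_nonneg fun l _ => mul_nonneg (hw l) (auxSOS (P l) v))
    constructor
    · intro x hx y hy a b ha hb hab
      intro j
      have hxj : 0 ≤ x j := hx j
      have hyj : 0 ≤ y j := hy j
      have : (a • x + b • y) j = a * x j + b * y j := by
        simp [Pi.add_apply, Pi.smul_apply, smul_eq_mul]
      rw [this]
      exact add_nonneg (mul_nonneg ha hxj) (mul_nonneg hb hyj)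
    · intro x hx y hy a b ha hb hab
      obtain rfl : a = 1 - b := by linarith
      have hb1 : b ≤ 1 := by linarith
      set v : Fin n → ℝ := fun i => y i - x i with hv
      obtain ⟨β, hT⟩ := Tc x v
      have harg : (1 - b) • x + b • y = fun i => x i + v i * b := by
        funext i
        simp only [Pi.add_apply, Pi.smul_apply, smul_eq_mul, hv]
        ring
      have hy1 : eval y p = eval x p + β * 1 + cf x v/2 * 1^2 + df v/6 * 1^3 := by
        rw [show y = (fun i => x i + v i * 1) from funext fun i => by simp [hv]]
        exact hT 1
      have hs0 : 0 ≤ (1+b)/3 := by linarith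
      have hs1 : (1+b)/3 ≤ 1 := by linarith
      have hzmem : ∀ j, 0 ≤ x j + v j * ((1+b)/3) := by
        intro j
        have hxj : 0 ≤ x j := hx j
        have hyj : 0 ≤ y j := hy j
        have : x j + v j * ((1+b)/3) = (1 - (1+b)/3) * x j + ((1+b)/3) * y j := by
          simp only [hv]; ring
        rw [this]
        exact add_nonneg (mul_nonneg (by linarith) hxj) (mul_nonneg hs0 hyj)
      have key : 0 ≤ cf x v + (1+b)/3 * df v := by
        have := hcpos (fun i => x i + v i * ((1+b)/3)) v hzmem
        rwa [hcd x v ((1+b)/3)] at this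
      simp only [smul_eq_mul]
      rw [harg, hT b, hy1]
      nlinarith [mul_nonneg (mul_nonneg hb (sub_nonneg.mpr hb1)) key]
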